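/- For every ε > 0, almost all graphs have Prague dimension d satisfying d ≥ (1/(1+ε))·((n−1)/(2·log₂ n) − 1/n); that is, the proportion, among all 2^{n(n−1)/2} labeled simple graphs on the vertex set {1,…,n}, of those graphs G with dim_P(G) ≥ (1/(1+ε))·((n−1)/(2·log₂ n) − 1/n) tends to 1 as n → ∞. -/

import Mathlib

/-- The Prague dimension `dim_P(G)` of a finite simple graph `G`: the minimal `d` such
that there is an injective map `φ` from `V(G)` to `d`-tuples of natural numbers with
two vertices adjacent in `G` if and only if their images differ in every coordinate
(equivalently, `G` is an induced subgraph of a categorical product of `d` complete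
graphs). -/
noncomputable def pragueDim {V : Type*} (G : SimpleGraph V) : ℕ :=
  sInf {d | ∃ φ : V → Fin d → ℕ, Function.Injective φ ∧
    ∀ u v : V, G.Adj u v ↔ ∀ k, φ u k ≠ φ v k}


open Function

lemma card_simpleGraph (V : Type*) [Fintype V] [DecidableEq V] :
    Fintype.card (SimpleGraph V) = 2 ^ (Fintype.card V).choose 2 := by
  classical
  have e : SimpleGraph V ≃ ({e : Sym2 V // ¬ e.IsDiag} → Bool) :=
    { toFun := fun G e => decide (e.1 ∈ G.edgeSet)
      invFun := fun f => SimpleGraph.fromEdgeSet {e | ∃ h : ¬ e.IsDiag, f ⟨e, h⟩}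
      left_inv := by
        intro G
        have : {e | ∃ h : ¬ e.IsDiag, (decide (e ∈ G.edgeSet) : Bool)} = G.edgeSet := by
          ext e
          simp only [Set.mem_setOf_eq, decide_eq_true_eq]
          exact ⟨fun ⟨_, h⟩ => h, fun h => ⟨G.not_isDiag_of_mem_edgeSet h, h⟩⟩
        show SimpleGraph.fromEdgeSet _ = G
        simp only []
        rw [this, SimpleGraph.fromEdgeSet_edgeSet]
      right_inv := by
        intro f
        funext e
        obtain ⟨e, he⟩ := e
        simp only [SimpleGraph.edgeSet_fromEdgeSet, Set.mem_diff, Set.mem_setOf_eq]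
        by_cases hf : f ⟨e, he⟩ <;> simp [hf, he] }
  rw [Fintype.card_congr e, Fintype.card_fun, Fintype.card_bool, Sym2.card_subtype_not_diag]

/-- The graph determined by a tuple assignment. -/
def graphOf {V α : Type*} (d : ℕ) (ψ : V → Fin d → α) : SimpleGraph V where
  Adj u v := u ≠ v ∧ ∀ k, ψ u k ≠ ψ v k
  symm := ⟨fun u v ⟨h1, h2⟩ => ⟨h1.symm, fun k => (h2 k).symm⟩⟩
  loopless := ⟨fun u ⟨h, _⟩ => h rfl⟩

lemma pragueDim_set_nonempty {n : ℕ} (G : SimpleGraph (Fin n)) :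
    {d | ∃ φ : Fin n → Fin d → ℕ, Function.Injective φ ∧
      ∀ u v : Fin n, G.Adj u v ↔ ∀ k, φ u k ≠ φ v k}.Nonempty := by
  classical
  set I := Option {p : Fin n × Fin n // p.1 < p.2 ∧ ¬ G.Adj p.1 p.2} with hI
  set e : I ≃ Fin (Fintype.card I) := Fintype.equivFin I with he
  set φ' : Fin n → I → ℕ := fun u i =>
    match i with
    | none => u.val
    | some ⟨(a, b), _⟩ => if u = b then a.val else u.val with hφ'
  refine ⟨Fintype.card I, fun u k => φ' u (e.symm k), ?_, ?_⟩
  · intro u v huv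
    have := congrFun huv (e none)
    simpa [hφ', Fin.val_injective.eq_iff] using this
  · intro u v
    constructor
    · intro hadj k
      have hne : u ≠ v := G.ne_of_adj hadj
      show φ' u (e.symm k) ≠ φ' v (e.symm k)
      generalize e.symm k = i
      rcases i with _ | ⟨⟨a, b⟩, hab, hnadj⟩
      · exact fun h => hne (Fin.val_injective h)
      · simp only [hφ']
        intro h
        by_cases hu : u = b <;> by_cases hv : v = b
        · exact hne (hu.trans hv.symm)
        · rw [if_pos hu, if_neg hv] at h
          have hva : v = a := Fin.val_injective h.symm
          subst hu; subst hva
          exact hnadj hadj.symm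
        · rw [if_neg hu, if_pos hv] at h
          have hua : u = a := Fin.val_injective h
          subst hv; subst hua
          exact hnadj hadj
        · rw [if_neg hu, if_neg hv] at h
          exact hne (Fin.val_injective h)
    · intro h
      have h' : ∀ i : I, φ' u i ≠ φ' v i := by
        intro i
        have := h (e i)
        simpa using this
      by_contra hnadj
      rcases eq_or_ne u v with rfl | hne
      · exact h' none rfl
      · rcases lt_or_gt_of_ne hne with hlt | hlt
        · exact h' (some ⟨(u, v), hlt, hnadj⟩) (by simp [hφ', hne])
        · exact h' (some ⟨(v, u), hlt, fun hh => hnadj hh.symm⟩) (by simp [hφ'])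

lemma exists_repr_of_le {n : ℕ} (G : SimpleGraph (Fin n)) (d : ℕ)
    (h : pragueDim G ≤ d) :
    ∃ φ : Fin n → Fin d → ℕ, Function.Injective φ ∧
      ∀ u v : Fin n, G.Adj u v ↔ ∀ k, φ u k ≠ φ v k := by
  obtain ⟨φ₀, hinj₀, hiff₀⟩ : ∃ φ : Fin n → Fin (pragueDim G) → ℕ, Function.Injective φ ∧
      ∀ u v : Fin n, G.Adj u v ↔ ∀ k, φ u k ≠ φ v k :=
    Nat.sInf_mem (pragueDim_set_nonempty G)
  refine ⟨fun u k => if hk : (k : ℕ) < pragueDim G then φ₀ u ⟨k, hk⟩ else u.val, ?_, ?_⟩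
  · intro u v huv
    rcases lt_or_eq_of_le h with hlt | heq
    · have := congrFun huv ⟨pragueDim G, hlt⟩
      simpa using Fin.val_injective (by simpa using this)
    · apply hinj₀
      funext j
      have hj : (j : ℕ) < d := heq ▸ j.2
      have := congrFun huv ⟨j, hj⟩
      simpa [j.2, Fin.eta] using this
  · intro u v
    rw [hiff₀ u v]
    constructor
    · intro hall k
      by_cases hk : (k : ℕ) < pragueDim G
      · simpa [hk] using hall ⟨k, hk⟩
      · have hne : u ≠ v := by
          intro huv; subst huv
          rcases Nat.eq_zero_or_pos (pragueDim G) with h0 | h0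
          · exact absurd ((hiff₀ u u).2 (fun k => absurd k.2 (by omega))) (G.irrefl)
          · exact (hall ⟨0, h0⟩) rfl
        simpa [hk] using fun hc => hne (Fin.val_injective hc)
    · intro hall j
      have hj : (j : ℕ) < d := lt_of_lt_of_le j.2 h
      have := hall ⟨j, hj⟩
      simpa [j.2, Fin.eta] using this

lemma card_pragueDim_le {n d : ℕ} :
    Nat.card {G : SimpleGraph (Fin n) // pragueDim G ≤ d} ≤ n ^ (n * d) := by
  classical
  have key : ∀ G : {G : SimpleGraph (Fin n) // pragueDim G ≤ d},
      ∃ ψ : Fin n → Fin d → Fin n, G.1 = graphOf d ψ := by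
    rintro ⟨G, hG⟩
    obtain ⟨φ, hinj, hiff⟩ := exists_repr_of_le G d hG
    refine ⟨fun u k => (Finset.univ.filter (fun w => φ w k = φ u k)).min'
        ⟨u, by simp⟩, ?_⟩
    set ψ : Fin n → Fin d → Fin n := fun u k =>
      (Finset.univ.filter (fun w => φ w k = φ u k)).min' ⟨u, by simp⟩ with hψ
    have hmem : ∀ u k, φ (ψ u k) k = φ u k := by
      intro u k
      have := Finset.min'_mem (Finset.univ.filter (fun w => φ w k = φ u k)) ⟨u, by simp⟩
      simpa [hψ] using this
    have hiffψ : ∀ u v k, φ u k = φ v k ↔ ψ u k = ψ v k := by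
      intro u v k
      constructor
      · intro h
        simp only [hψ]
        congr 1
        ext w
        simp [h]
      · intro h
        have := hmem u k
        rw [h, hmem v k] at this
        exact this.symm
    ext u v
    simp only [graphOf]
    constructor
    · intro hadj
      exact ⟨G.ne_of_adj hadj, fun k hk => ((hiff u v).1 hadj k) ((hiffψ u v k).2 hk)⟩
    · rintro ⟨hne, hall⟩
      exact (hiff u v).2 fun k hk => (hall k) ((hiffψ u v k).1 hk)
  choose Ψ hΨ using key
  have hinj : Function.Injective Ψ := by
    intro G₁ G₂ h
    exact Subtype.ext ((hΨ G₁).trans (h ▸ (hΨ G₂).symm))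
  calc Nat.card {G : SimpleGraph (Fin n) // pragueDim G ≤ d}
      ≤ Nat.card (Fin n → Fin d → Fin n) := Nat.card_le_card_of_injective Ψ hinj
    _ = n ^ (n * d) := by
        simp [Nat.card_eq_fintype_card, Fintype.card_fun, ← pow_mul, mul_comm d n]

lemma htot (n : ℕ) : Fintype.card (SimpleGraph (Fin n)) = 2 ^ (n * (n - 1) / 2) := by
  rw [card_simpleGraph, Fintype.card_fin, Nat.choose_two_right]

set_option maxHeartbeats 1000000 in
lemma hsplit {n : ℕ} (p : SimpleGraph (Fin n) → Prop) :
    (Nat.card {G : SimpleGraph (Fin n) // p G} : ℝ) / 2 ^ (n * (n - 1) / 2)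
      = 1 - (Nat.card {G : SimpleGraph (Fin n) // ¬ p G} : ℝ) / 2 ^ (n * (n - 1) / 2) := by
  classical
  have h1 : Nat.card {G : SimpleGraph (Fin n) // ¬ p G}
      = 2 ^ (n * (n - 1) / 2) - Nat.card {G : SimpleGraph (Fin n) // p G} := by
    rw [Nat.card_eq_fintype_card, Nat.card_eq_fintype_card, ← htot n,
      Fintype.card_subtype_compl]
  have h2 : Nat.card {G : SimpleGraph (Fin n) // p G} ≤ 2 ^ (n * (n - 1) / 2) := by
    rw [Nat.card_eq_fintype_card, ← htot n]
    exact Fintype.card_subtype_le _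
  have hpow : (0:ℝ) < 2 ^ (n * (n - 1) / 2) := by positivity
  rw [h1, Nat.cast_sub h2]
  field_simp
  push_cast
  ring


open Filter in
/-- For every `ε > 0`, almost all graphs have Prague dimension at least
`(1/(1+ε))·((n−1)/(2·log₂ n) − 1/n)`: the proportion, among all `2^(n(n−1)/2)` labeled
simple graphs on `{1,…,n}`, of graphs satisfying this lower bound tends to `1` as
`n → ∞`. -/
theorem almost_all_graphs_pragueDim_lower_bound (ε : ℝ) (hε : 0 < ε) :
    Tendsto (fun n : ℕ =>
      (Nat.card {G : SimpleGraph (Fin n) //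
          (1 / (1 + ε)) * (((n : ℝ) - 1) / (2 * Real.logb 2 n) - 1 / n)
            ≤ (pragueDim G : ℝ)} : ℝ) / 2 ^ (n * (n - 1) / 2))
      atTop (nhds 1) := by
  classical
  have hε1 : (0:ℝ) < 1 + ε := by linarith
  have hc0 : 0 < ε / (1 + ε) := div_pos hε hε1
  have hr0 : (0:ℝ) < (2:ℝ) ^ (-(ε / (1 + ε))) := Real.rpow_pos_of_pos two_pos _
  have hr1 : (2:ℝ) ^ (-(ε / (1 + ε))) < 1 :=
    Real.rpow_lt_one_of_one_lt_of_neg one_lt_two (neg_neg_of_pos hc0)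
  have hkey : ∀ n : ℕ, 3 ≤ n →
      (Nat.card {G : SimpleGraph (Fin n) //
          ¬ ((1 / (1 + ε)) * (((n : ℝ) - 1) / (2 * Real.logb 2 n) - 1 / n)
            ≤ (pragueDim G : ℝ))} : ℝ) / 2 ^ (n * (n - 1) / 2)
        ≤ ((2:ℝ) ^ (-(ε / (1 + ε)))) ^ n := by
    intro n hn
    have hn0 : (0:ℝ) < n := by exact_mod_cast (by omega : 0 < n)
    have hL1 : 1 ≤ Real.logb 2 n := by
      have h := Real.logb_le_logb_of_le one_lt_two two_pos
        (by exact_mod_cast (by omega : 2 ≤ n) : (2:ℝ) ≤ n)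
      rwa [Real.logb_self_eq_one one_lt_two] at h
    set L := Real.logb 2 n with hLdef
    have hL0 : 0 < L := lt_of_lt_of_le one_pos hL1
    set B : ℝ := (1 / (1 + ε)) * (((n : ℝ) - 1) / (2 * L) - 1 / n) with hBdef
    set D : ℕ := ⌊B⌋₊ with hD
    have hcount : Nat.card {G : SimpleGraph (Fin n) //
        ¬ (B ≤ (pragueDim G : ℝ))} ≤ n ^ (n * D) := by
      refine le_trans (Nat.card_le_card_of_injective
        (fun G => (⟨G.1, Nat.le_floor (le_of_lt (not_le.1 G.2))⟩ :
          {G : SimpleGraph (Fin n) // pragueDim G ≤ D})) ?_) card_pragueDim_le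
      intro a b h
      simp only [Subtype.mk.injEq] at h
      exact Subtype.ext h
    have hdvd : 2 ∣ n * (n - 1) := by
      rcases Nat.even_or_odd n with h | h
      · exact (h.mul_right _).two_dvd
      · exact ((Nat.Odd.sub_odd h odd_one).mul_left _).two_dvd
    have hNcast : ((n * (n - 1) / 2 : ℕ) : ℝ) = (n : ℝ) * ((n : ℝ) - 1) / 2 := by
      rw [Nat.cast_div hdvd (by norm_num)]
      push_cast [Nat.cast_sub (by omega : 1 ≤ n)]
      ring
    set NR : ℝ := (n : ℝ) * ((n : ℝ) - 1) / 2 with hNR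
    have hNRn : (n : ℝ) ≤ NR := by
      rw [hNR]
      have h3 : (3:ℝ) ≤ n := by exact_mod_cast hn
      nlinarith
    have hDb : (D : ℝ) * (L * n) ≤ (1 / (1 + ε)) * NR := by
      rcases le_or_gt 0 B with hb | hb
      · have h1 : (D : ℝ) ≤ B := Nat.floor_le hb
        have h2 : (D : ℝ) * (L * n) ≤ B * (L * n) :=
          mul_le_mul_of_nonneg_right h1 (mul_nonneg hL0.le hn0.le)
        have h3 : B * (L * n) = (1 / (1 + ε)) * (NR - L) := by
          rw [hBdef, hNR]
          field_simp
        have h4 : (1 / (1 + ε)) * (NR - L) ≤ (1 / (1 + ε)) * NR := by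
          apply mul_le_mul_of_nonneg_left _ (div_nonneg one_pos.le hε1.le)
          linarith
        linarith
      · have hD0 : D = 0 := Nat.floor_of_nonpos hb.le
        rw [hD0]
        simp only [Nat.cast_zero, zero_mul]
        exact mul_nonneg (div_nonneg one_pos.le hε1.le) (le_trans hn0.le hNRn)
    have hexp : L * ((n * D : ℕ) : ℝ) - NR ≤ (-(ε / (1 + ε))) * n := by
      have h1 : L * ((n * D : ℕ) : ℝ) = (D : ℝ) * (L * n) := by push_cast; ring
      have h2 : (1 / (1 + ε)) * NR - NR = (-(ε / (1 + ε))) * NR := by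
        field_simp
        ring
      have h3 : (-(ε / (1 + ε))) * NR ≤ (-(ε / (1 + ε))) * n := by
        have := mul_le_mul_of_nonneg_left hNRn hc0.le
        linarith
      linarith [hDb]
    have h2L : (2:ℝ) ^ L = n := Real.rpow_logb two_pos (by norm_num) hn0
    have hnum : ((n : ℝ)) ^ (n * D : ℕ) = (2:ℝ) ^ (L * ((n * D : ℕ) : ℝ)) := by
      rw [← h2L, ← Real.rpow_natCast ((2:ℝ) ^ L) (n * D), ← Real.rpow_mul two_pos.le]
    have hden : (2:ℝ) ^ (n * (n - 1) / 2 : ℕ) = (2:ℝ) ^ (NR : ℝ) := by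
      rw [← Real.rpow_natCast (2:ℝ) (n * (n - 1) / 2), hNcast, hNR]
    have hrn : ((2:ℝ) ^ (-(ε / (1 + ε)))) ^ n
        = (2:ℝ) ^ ((-(ε / (1 + ε))) * (n:ℝ)) := by
      rw [← Real.rpow_natCast ((2:ℝ) ^ (-(ε / (1 + ε)))) n, ← Real.rpow_mul two_pos.le]
    calc (Nat.card {G : SimpleGraph (Fin n) //
          ¬ (B ≤ (pragueDim G : ℝ))} : ℝ) / 2 ^ (n * (n - 1) / 2)
        ≤ ((n : ℝ) ^ (n * D : ℕ)) / 2 ^ (n * (n - 1) / 2) := by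
          gcongr
          exact_mod_cast hcount
      _ = (2:ℝ) ^ (L * ((n * D : ℕ) : ℝ) - NR) := by
          rw [hnum, hden, Real.rpow_sub two_pos]
      _ ≤ (2:ℝ) ^ ((-(ε / (1 + ε))) * (n:ℝ)) :=
          Real.rpow_le_rpow_of_exponent_le one_le_two hexp
      _ = ((2:ℝ) ^ (-(ε / (1 + ε)))) ^ n := hrn.symm
  have hg0 : Tendsto (fun n : ℕ =>
      (Nat.card {G : SimpleGraph (Fin n) //
          ¬ ((1 / (1 + ε)) * (((n : ℝ) - 1) / (2 * Real.logb 2 n) - 1 / n)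
            ≤ (pragueDim G : ℝ))} : ℝ) / 2 ^ (n * (n - 1) / 2))
      atTop (nhds 0) := by
    apply squeeze_zero' (Eventually.of_forall (fun n => by positivity))
      (eventually_atTop.2 ⟨3, hkey⟩)
    exact tendsto_pow_atTop_nhds_zero_of_lt_one hr0.le hr1
  have hfin := (tendsto_const_nhds (x := (1:ℝ)) (f := atTop (α := ℕ))).sub hg0
  rw [sub_zero] at hfin
  exact hfin.congr (fun n => (hsplit _).symm)
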